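/- Let n, t be integers with 0 ≤ t ≤ n, let Δ ≥ 0 be a real number, and let 0 < ε < 1. Let X = (X₁, X₂) be a distribution on {0,1}^{t} × {0,1}^{n−t} with min-entropy at least n − Δ. Then X is ε-close in statistical distance to some distribution (Y₁, Y₂) on {0,1}^{t} × {0,1}^{n−t} that is a (t − Δ, n − t − Δ − log₂(1/ε))-block source, i.e., Y₁ has min-entropy at least t − Δ, and for every y₁ in the support of Y₁ the conditional distribution of Y₂ given Y₁ = y₁ has min-entropy at least n − t − Δ − log₂(1/ε). -/

import Mathlib

/-- `P` is a (finitely supported) probability distribution on the finite type `T`. -/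
def IsProb {T : Type*} [Fintype T] (P : T → ℝ) : Prop :=
  (∀ t, 0 ≤ P t) ∧ ∑ t, P t = 1

/-- Statistical (total variation) distance `(1/2)·Σ_t |P t − Q t|`. -/
noncomputable def statDist {T : Type*} [Fintype T] (P Q : T → ℝ) : ℝ :=
  (∑ t, |P t - Q t|) / 2

/-- `P` has min-entropy at least `k`: every point has probability at most `2^{−k}`. -/
noncomputable def MinEntropyGe {T : Type*} [Fintype T] (P : T → ℝ) (k : ℝ) : Prop :=
  ∀ t, P t ≤ (2 : ℝ) ^ (-k)

/-- The pushforward of `P` along `f`. -/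
noncomputable def pushf {A B : Type*} [Fintype A] [DecidableEq B] (P : A → ℝ) (f : A → B) :
    B → ℝ :=
  fun b => ∑ a, if f a = b then P a else 0

/-- `E : {0,1}^n × {0,1}^d → {0,1}^m` is a `(k, ε)`-extractor: for every `k`-source `X`
on `{0,1}^n`, the distribution `E(X, U_d)` is `ε`-close to uniform on `{0,1}^m`. -/
noncomputable def IsExtractor {n d m : ℕ} (k ε : ℝ)
    (E : (Fin n → Bool) → (Fin d → Bool) → (Fin m → Bool)) : Prop :=
  ∀ P : (Fin n → Bool) → ℝ, IsProb P → MinEntropyGe P k →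
    statDist
      (pushf (fun q : (Fin n → Bool) × (Fin d → Bool) =>
          P q.1 / (Fintype.card (Fin d → Bool) : ℝ))
        (fun q => E q.1 q.2))
      (fun _ => 1 / (Fintype.card (Fin m → Bool) : ℝ)) ≤ ε

/-- `(P₁, P₂)` jointly form a `(k₁, k₂)`-block source: the first marginal has min-entropy
at least `k₁`, and every conditional distribution of the second coordinate given a
first coordinate in the support has min-entropy at least `k₂`. -/
noncomputable def IsBlockSource {A B : Type*} [Fintype A] [Fintype B] (k₁ k₂ : ℝ)
    (P : A × B → ℝ) : Prop :=
  (∀ a, (∑ b, P (a, b)) ≤ (2 : ℝ) ^ (-k₁)) ∧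
  (∀ a, 0 < (∑ b, P (a, b)) → ∀ b, P (a, b) / (∑ b', P (a, b')) ≤ (2 : ℝ) ^ (-k₂))

/-- **block-source decomposition.** If `X = (X₁, X₂)` on
`{0,1}^t × {0,1}^{n−t}` has min-entropy at least `n − Δ`, then `X` is `ε`-close to some
`(Y₁, Y₂)` that is a `(t − Δ, n − t − Δ − log₂(1/ε))`-block source. -/
theorem stmt_18 (n t : ℕ) (ht : t ≤ n) (Δ : ℝ) (hΔ : 0 ≤ Δ)
    (ε : ℝ) (hε0 : 0 < ε) (hε1 : ε < 1)
    (P : (Fin t → Bool) × (Fin (n - t) → Bool) → ℝ)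
    (hP : IsProb P) (hent : MinEntropyGe P ((n : ℝ) - Δ)) :
    ∃ Q : (Fin t → Bool) × (Fin (n - t) → Bool) → ℝ,
      IsProb Q ∧ statDist P Q ≤ ε ∧
        IsBlockSource ((t : ℝ) - Δ) ((n : ℝ) - t - Δ - Real.logb 2 (1 / ε)) Q := by
  classical
  obtain ⟨hPnn, hPsum⟩ := hP
  set m : (Fin t → Bool) → ℝ := fun a => ∑ b, P (a, b) with hm
  have hmnn : ∀ a, 0 ≤ m a := fun a => Finset.sum_nonneg fun b _ => hPnn _
  set cB : ℝ := (Fintype.card (Fin (n - t) → Bool) : ℝ) with hcBdef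
  have hcast : ((n - t : ℕ) : ℝ) = (n : ℝ) - t := by
    have := Nat.cast_sub ht (R := ℝ); exact this
  have hcB : cB = (2 : ℝ) ^ ((n : ℝ) - (t : ℝ)) := by
    rw [hcBdef]
    simp only [Fintype.card_fun, Fintype.card_bool, Fintype.card_fin]
    push_cast
    rw [← hcast, Real.rpow_natCast]
  have hcBpos : 0 < cB := by rw [hcB]; positivity
  set Bad : (Fin t → Bool) → Prop := fun a => m a < ε * (2 : ℝ) ^ (-(t : ℝ)) with hBad
  set Q : (Fin t → Bool) × (Fin (n - t) → Bool) → ℝ :=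
    fun p => if Bad p.1 then m p.1 / cB else P p with hQ
  have hQnn : ∀ p, 0 ≤ Q p := by
    intro p; rw [hQ]; dsimp only
    split
    · exact div_nonneg (hmnn _) hcBpos.le
    · exact hPnn p
  have hQmarg : ∀ a, (∑ b, Q (a, b)) = m a := by
    intro a
    by_cases h : Bad a
    · simp only [hQ, h, if_true]
      rw [Finset.sum_const, Finset.card_univ, nsmul_eq_mul]
      rw [hcBdef]
      field_simp
    · simp only [hQ, h, if_false]; rfl
  -- sum of Q is 1
  have hQsum : ∑ p, Q p = 1 := by
    rw [Fintype.sum_prod_type]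
    calc (∑ a, ∑ b, Q (a, b)) = ∑ a, m a := by
          exact Finset.sum_congr rfl fun a _ => hQmarg a
      _ = 1 := by simp only [hm]; rw [← Fintype.sum_prod_type]; exact hPsum
  -- marginal bound
  have hmarg_le : ∀ a, m a ≤ (2 : ℝ) ^ (-((t : ℝ) - Δ)) := by
    intro a
    have h1 : m a ≤ cB * (2 : ℝ) ^ (-((n : ℝ) - Δ)) := by
      rw [hm]
      calc (∑ b, P (a, b)) ≤ ∑ _b : Fin (n - t) → Bool, (2 : ℝ) ^ (-((n : ℝ) - Δ)) :=
            Finset.sum_le_sum fun b _ => hent (a, b)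
        _ = cB * (2 : ℝ) ^ (-((n : ℝ) - Δ)) := by
            rw [Finset.sum_const, Finset.card_univ, nsmul_eq_mul, hcBdef]
    have h2 : cB * (2 : ℝ) ^ (-((n : ℝ) - Δ)) = (2 : ℝ) ^ (-((t : ℝ) - Δ)) := by
      rw [hcB, ← Real.rpow_add two_pos]
      ring_nf
    linarith [h1, h2.le]
  -- card of A
  have hcA : ((Fintype.card (Fin t → Bool)) : ℝ) = (2 : ℝ) ^ ((t : ℝ)) := by
    simp only [Fintype.card_fun, Fintype.card_bool, Fintype.card_fin]
    push_cast
    rw [Real.rpow_natCast]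
  have hεt : 0 < ε * (2 : ℝ) ^ (-(t : ℝ)) := by positivity
  refine ⟨Q, ⟨hQnn, hQsum⟩, ?_, ?_, ?_⟩
  · -- statDist
    unfold statDist
    rw [div_le_iff₀ (by norm_num : (0:ℝ) < 2)]
    calc (∑ p, |P p - Q p|) = ∑ a, ∑ b, |P (a, b) - Q (a, b)| := Fintype.sum_prod_type _
      _ ≤ ∑ _a : Fin t → Bool, 2 * (ε * (2 : ℝ) ^ (-(t : ℝ))) := by
          apply Finset.sum_le_sum
          intro a _
          by_cases h : Bad a
          · have hb : ∀ b, |P (a, b) - Q (a, b)| ≤ P (a, b) + m a / cB := by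
              intro b
              simp only [hQ, h, if_true]
              have := abs_sub (P (a,b)) (m a / cB)
              calc |P (a, b) - m a / cB| ≤ |P (a,b)| + |m a / cB| := abs_sub _ _
                _ = P (a,b) + m a / cB := by
                    rw [abs_of_nonneg (hPnn _), abs_of_nonneg (div_nonneg (hmnn _) hcBpos.le)]
            calc (∑ b, |P (a, b) - Q (a, b)|) ≤ ∑ b, (P (a, b) + m a / cB) :=
                  Finset.sum_le_sum fun b _ => hb b
              _ = m a + m a := by
                  have hma : (∑ b : Fin (n - t) → Bool, P (a, b)) = m a := rfl
                  rw [Finset.sum_add_distrib, hma, Finset.sum_const, Finset.card_univ,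
                    nsmul_eq_mul, hcBdef]
                  field_simp
              _ ≤ 2 * (ε * (2 : ℝ) ^ (-(t : ℝ))) := by
                  have hlt : m a < ε * (2 : ℝ) ^ (-(t : ℝ)) := h
                  linarith
          · have : ∀ b, |P (a, b) - Q (a, b)| = 0 := by
              intro b; simp only [hQ, h, if_false]; simp
            rw [Finset.sum_congr rfl fun b _ => this b]
            simp only [Finset.sum_const, smul_zero]
            positivity
      _ = ε * 2 := by
          rw [Finset.sum_const, Finset.card_univ, nsmul_eq_mul, hcA]
          have h1 : (2:ℝ) ^ ((t:ℝ)) * (2:ℝ) ^ (-(t:ℝ)) = 1 := by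
            rw [← Real.rpow_add two_pos]; simp
          linear_combination (2 * ε) * h1
  · -- first block condition
    intro a
    rw [hQmarg a]
    exact hmarg_le a
  · -- second block condition
    intro a hpos b
    rw [hQmarg a] at hpos ⊢
    set k₂ : ℝ := (n : ℝ) - t - Δ - Real.logb 2 (1 / ε) with hk2
    by_cases h : Bad a
    · have hQv : Q (a, b) = m a / cB := by simp only [hQ, h, if_true]
      rw [hQv]
      rw [div_div, mul_comm, ← div_div, div_self (ne_of_gt hpos)]
      have h1 : (1 : ℝ) / cB = (2 : ℝ) ^ (-((n : ℝ) - (t : ℝ))) := by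
        rw [hcB, Real.rpow_neg (by norm_num), one_div]
      rw [h1]
      apply Real.rpow_le_rpow_of_exponent_le (by norm_num)
      have hlogb : 0 ≤ Real.logb 2 (1 / ε) :=
        Real.logb_nonneg (by norm_num) (by rw [le_div_iff₀ hε0]; linarith)
      rw [hk2]; linarith
    · have hQv : Q (a, b) = P (a, b) := by simp only [hQ, h, if_false]
      rw [hQv]
      have hge : ε * (2 : ℝ) ^ (-(t : ℝ)) ≤ m a := not_lt.mp h
      have hnum : P (a, b) ≤ (2 : ℝ) ^ (-((n : ℝ) - Δ)) := hent (a, b)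
      have hd : P (a, b) / m a ≤ (2 : ℝ) ^ (-((n : ℝ) - Δ)) / (ε * (2 : ℝ) ^ (-(t : ℝ))) :=
        div_le_div₀ (by positivity) hnum hεt hge
      have hkey : (2 : ℝ) ^ (-((n : ℝ) - Δ)) / (ε * (2 : ℝ) ^ (-(t : ℝ))) = (2 : ℝ) ^ (-k₂) := by
        have hlog : (2 : ℝ) ^ (Real.logb 2 (1 / ε)) = 1 / ε :=
          Real.rpow_logb (by norm_num) (by norm_num) (by positivity)
        rw [hk2, show -((n : ℝ) - t - Δ - Real.logb 2 (1 / ε))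
            = (-((n : ℝ) - Δ)) + (t : ℝ) + Real.logb 2 (1 / ε) by ring]
        rw [Real.rpow_add two_pos, Real.rpow_add two_pos, hlog]
        rw [Real.rpow_neg (by norm_num : (0:ℝ) ≤ 2) (t : ℝ)]
        have h2t : (0:ℝ) < (2:ℝ) ^ ((t:ℝ)) := by positivity
        field_simp
      rw [hkey] at hd
      exact hd
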